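/- Let X be a standardized 3-Dirac mixture with ordered locations μ_1 < μ_2 < μ_3, probabilities ε_1, ε_2, ε_3 > 0 summing to 1 (so ε_2 = 1 − ε_1 − ε_3), and let s* denote the smallest minimizer of s ↦ Var|X − s|. Then s* ∈ [μ_1, μ_2] if and only if μ_1 ≤ U(ε_1, ε_3) := max{U_1, U_2}, where U_1 = −(√2/2)·√((1−ε_1)/ε_1 + √((1−ε_1)/ε_1)·√(ε_3/(1−ε_3))) and U_2 = −((2ε_2 + 4ε_1ε_3)/√(4ε_1ε_3(ε_2 + 4ε_1ε_3)))·√(ε_3/(1−ε_3)). -/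

import Mathlib

open MeasureTheory ProbabilityTheory
set_option maxHeartbeats 1000000

lemma integrable_dirac' {f : ℝ → ℝ} (hf : Measurable f) (a : ℝ) :
    Integrable f (Measure.dirac a) := by
  refine ⟨hf.aestronglyMeasurable, ?_⟩
  rw [HasFiniteIntegral, lintegral_dirac]
  exact ENNReal.coe_lt_top

lemma tri_integral (ε₁ ε₂ ε₃ : ℝ) (h1 : 0 ≤ ε₁) (h2 : 0 ≤ ε₂) (h3 : 0 ≤ ε₃)
    (μ₁ μ₂ μ₃ : ℝ) (f : ℝ → ℝ) (hf : Measurable f) :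
    ∫ x, f x ∂(ENNReal.ofReal ε₁ • Measure.dirac μ₁ + ENNReal.ofReal ε₂ • Measure.dirac μ₂ +
      ENNReal.ofReal ε₃ • Measure.dirac μ₃) = ε₁ * f μ₁ + ε₂ * f μ₂ + ε₃ * f μ₃ := by
  have hi : ∀ (c : ℝ) (a : ℝ), Integrable f (ENNReal.ofReal c • Measure.dirac a) :=
    fun c a => (integrable_dirac' hf a).smul_measure ENNReal.ofReal_ne_top
  rw [integral_add_measure ((hi _ _).add_measure (hi _ _)) (hi _ _),
    integral_add_measure (hi _ _) (hi _ _), integral_smul_measure, integral_smul_measure,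
    integral_smul_measure, integral_dirac, integral_dirac, integral_dirac,
    ENNReal.toReal_ofReal h1, ENNReal.toReal_ofReal h2, ENNReal.toReal_ofReal h3]
  simp [smul_eq_mul]

lemma tri_memLp (ε₁ ε₂ ε₃ : ℝ) (μ₁ μ₂ μ₃ : ℝ) (f : ℝ → ℝ) (hf : Measurable f) :
    MemLp f 2 (ENNReal.ofReal ε₁ • Measure.dirac μ₁ + ENNReal.ofReal ε₂ • Measure.dirac μ₂ +
      ENNReal.ofReal ε₃ • Measure.dirac μ₃) := by
  refine ⟨hf.aestronglyMeasurable, ?_⟩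
  rw [eLpNorm_eq_lintegral_rpow_enorm_toReal (by norm_num) (by norm_num)]
  rw [lintegral_add_measure, lintegral_add_measure, lintegral_smul_measure,
    lintegral_smul_measure, lintegral_smul_measure, lintegral_dirac, lintegral_dirac,
    lintegral_dirac]
  refine ENNReal.rpow_lt_top_of_nonneg (by norm_num) ?_
  refine (ENNReal.add_lt_top.2 ⟨ENNReal.add_lt_top.2 ⟨?_, ?_⟩, ?_⟩).ne <;>
    exact ENNReal.mul_lt_top ENNReal.ofReal_lt_top
      (ENNReal.rpow_lt_top_of_nonneg (by norm_num) enorm_ne_top)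

lemma tri_prob (ε₁ ε₂ ε₃ : ℝ) (h1 : 0 ≤ ε₁) (h2 : 0 ≤ ε₂) (h3 : 0 ≤ ε₃)
    (hsum : ε₁ + ε₂ + ε₃ = 1) (μ₁ μ₂ μ₃ : ℝ) :
    IsProbabilityMeasure (ENNReal.ofReal ε₁ • Measure.dirac μ₁ +
      ENNReal.ofReal ε₂ • Measure.dirac μ₂ + ENNReal.ofReal ε₃ • Measure.dirac μ₃) := by
  constructor
  simp only [Measure.add_apply, Measure.smul_apply, smul_eq_mul, measure_univ, mul_one]
  rw [← ENNReal.ofReal_add h1 h2, ← ENNReal.ofReal_add (by linarith) h3, hsum,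
    ENNReal.ofReal_one]

section core
variable {ε₁ ε₃ μ₁ μ₂ μ₃ : ℝ} {V : ℝ → ℝ}

-- region formulas
lemma regions (hε₁ : 0 < ε₁) (hε₂ : 0 < 1 - ε₁ - ε₃) (hε₃ : 0 < ε₃)
    (h12 : μ₁ < μ₂) (h23 : μ₂ < μ₃)
    (m1 : ε₁*μ₁ + (1-ε₁-ε₃)*μ₂ + ε₃*μ₃ = 0)
    (m2 : ε₁*μ₁^2 + (1-ε₁-ε₃)*μ₂^2 + ε₃*μ₃^2 = 1)
    (hV : ∀ s, V s = (ε₁*(μ₁-s)^2 + (1-ε₁-ε₃)*(μ₂-s)^2 + ε₃*(μ₃-s)^2)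
      - (ε₁*|μ₁-s| + (1-ε₁-ε₃)*|μ₂-s| + ε₃*|μ₃-s|)^2) :
    (∀ s, s ≤ μ₁ → V s = 1) ∧
    (∀ s, μ₁ ≤ s → s ≤ μ₂ → V s = 1 + 4*ε₁*((1-ε₁)*s+ε₁*μ₁)*(s-μ₁)) ∧
    (∀ s, μ₂ ≤ s → s ≤ μ₃ → V s = 1 + 4*ε₃*((1-ε₃)*s+ε₃*μ₃)*(s-μ₃)) ∧
    (∀ s, μ₃ ≤ s → V s = 1) := by
  refine ⟨fun s hs => ?_, fun s hs1 hs2 => ?_, fun s hs1 hs2 => ?_, fun s hs => ?_⟩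
  · rw [hV, abs_of_nonneg (by linarith), abs_of_nonneg (by linarith),
      abs_of_nonneg (by linarith)]
    linear_combination m2 - (ε₁*μ₁+(1-ε₁-ε₃)*μ₂+ε₃*μ₃)*m1
  · rw [hV, abs_of_nonpos (by linarith), abs_of_nonneg (by linarith),
      abs_of_nonneg (by linarith)]
    linear_combination m2 + (-2*s - 2*((2*ε₁-1)*s - 2*ε₁*μ₁) - (ε₁*μ₁+(1-ε₁-ε₃)*μ₂+ε₃*μ₃))*m1
  · rw [hV, abs_of_nonpos (by linarith), abs_of_nonpos (by linarith),
      abs_of_nonneg (by linarith)]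
    linear_combination m2 + (-2*s + 2*((1-2*ε₃)*s + 2*ε₃*μ₃) - (ε₁*μ₁+(1-ε₁-ε₃)*μ₂+ε₃*μ₃))*m1
  · rw [hV, abs_of_nonpos (by linarith), abs_of_nonpos (by linarith),
      abs_of_nonpos (by linarith)]
    linear_combination m2 - (ε₁*μ₁+(1-ε₁-ε₃)*μ₂+ε₃*μ₃)*m1

end core

lemma core (ε₁ ε₃ μ₁ μ₂ μ₃ : ℝ) (V : ℝ → ℝ)
    (hε₁ : 0 < ε₁) (hε₂ : 0 < 1 - ε₁ - ε₃) (hε₃ : 0 < ε₃)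
    (h12 : μ₁ < μ₂) (h23 : μ₂ < μ₃)
    (m1 : ε₁*μ₁ + (1-ε₁-ε₃)*μ₂ + ε₃*μ₃ = 0)
    (m2 : ε₁*μ₁^2 + (1-ε₁-ε₃)*μ₂^2 + ε₃*μ₃^2 = 1)
    (hVlo : ∀ s, s ≤ μ₁ → V s = 1)
    (hV1 : ∀ s, μ₁ ≤ s → s ≤ μ₂ → V s = 1 + 4*ε₁*((1-ε₁)*s+ε₁*μ₁)*(s-μ₁))
    (hV2 : ∀ s, μ₂ ≤ s → s ≤ μ₃ → V s = 1 + 4*ε₃*((1-ε₃)*s+ε₃*μ₃)*(s-μ₃))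
    (hVhi : ∀ s, μ₃ ≤ s → V s = 1)
    (sstar : ℝ)
    (hmin : ∀ s, V sstar ≤ V s)
    (hleast : ∀ t, (∀ s, V t ≤ V s) → sstar ≤ t) :
    sstar ∈ Set.Icc μ₁ μ₂ ↔
      ((1-2*ε₃)*μ₃ ≤ 2*(1-ε₃)*μ₂ ∨
        0 ≤ ε₁*(1-ε₃)*μ₁^2 - ε₃*(1-ε₁)*μ₃^2) := by
  have he1 : (0:ℝ) < 1 - ε₁ := by linarith
  have he3 : (0:ℝ) < 1 - ε₃ := by linarith
  have hμ₁ : μ₁ < 0 := by nlinarith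
  have hμ₃ : 0 < μ₃ := by nlinarith
  have hvtx : 0 < (1-ε₁)*μ₃ + ε₁*μ₁ := by nlinarith
  -- value at μ₂
  have hVμ₂ : V μ₂ = 1 - 4*ε₁*ε₃*(μ₂-μ₁)*(μ₃-μ₂) := by
    rw [hV1 μ₂ h12.le le_rfl]; linear_combination 4*ε₁*(μ₂-μ₁)*m1
  have hVμ₂lt : V μ₂ < 1 := by rw [hVμ₂]; nlinarith [mul_pos (mul_pos (mul_pos hε₁ hε₃) (sub_pos.2 h12)) (sub_pos.2 h23)]
  -- lower bound always: μ₁ ≤ sstar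
  have hlow : μ₁ < sstar := by
    by_contra h
    have := hmin μ₂
    rw [hVlo sstar (by linarith)] at this
    linarith
  -- parabola lower bounds
  have min1 : ∀ s, μ₁ ≤ s → s ≤ μ₂ → -ε₁*μ₁^2 ≤ (1-ε₁) * (V s - 1) := by
    intro s hs1 hs2
    rw [hV1 s hs1 hs2]
    nlinarith [sq_nonneg (2*(1-ε₁)*s - (1-2*ε₁)*μ₁)]
  have min2 : ∀ s, μ₂ ≤ s → s ≤ μ₃ → -ε₃*μ₃^2 ≤ (1-ε₃) * (V s - 1) := by
    intro s hs1 hs2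
    rw [hV2 s hs1 hs2]
    nlinarith [sq_nonneg (2*(1-ε₃)*s - (1-2*ε₃)*μ₃)]
  -- D ≥ 0 implies S1
  have DS1 : 0 ≤ ε₁*(1-ε₃)*μ₁^2 - ε₃*(1-ε₁)*μ₃^2 → (1-2*ε₁)*μ₁ ≤ 2*(1-ε₁)*μ₂ := by
    intro hD
    have hd2 : 4*ε₁*ε₃*(1-ε₁)*(1-ε₃) ≤ ((1-ε₁-ε₃)+2*ε₁*ε₃)^2 := by
      nlinarith [sq_nonneg (1-ε₁-ε₃)]
    have hsq : (2*ε₃*(1-ε₁)*μ₃)^2 ≤ (((1-ε₁-ε₃)+2*ε₁*ε₃)*μ₁)^2 := by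
      nlinarith [mul_le_mul_of_nonneg_right hd2 (sq_nonneg μ₁),
        mul_le_mul_of_nonneg_left hD (by positivity : (0:ℝ) ≤ 4*ε₃*(1-ε₁))]
    have hkey : 2*ε₃*(1-ε₁)*μ₃ ≤ ((1-ε₁-ε₃)+2*ε₁*ε₃)*(-μ₁) := by
      nlinarith [hsq, mul_pos (mul_pos (mul_pos two_pos hε₃) he1) hμ₃,
        mul_pos (by nlinarith : (0:ℝ) < (1-ε₁-ε₃)+2*ε₁*ε₃) (by linarith : (0:ℝ) < -μ₁)]
    have hlin : (1-ε₁-ε₃)*(2*(1-ε₁)*μ₂ - (1-2*ε₁)*μ₁)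
        = ((1-ε₁-ε₃)+2*ε₁*ε₃)*(-μ₁) - 2*ε₃*(1-ε₁)*μ₃ := by
      linear_combination 2*(1-ε₁)*m1
    nlinarith [hlin, hkey, hε₂]
  constructor
  · -- forward (contrapositive)
    intro hs
    by_contra hC
    push_neg at hC
    obtain ⟨hS2n, hDn⟩ := hC
    set t₂ := (1-2*ε₃)*μ₃/(2*(1-ε₃)) with ht₂def
    have ht₂ : 2*(1-ε₃)*t₂ = (1-2*ε₃)*μ₃ := by
      rw [ht₂def]; field_simp
    have hμ₂t₂ : μ₂ < t₂ := by nlinarith [ht₂, hS2n]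
    have ht₂μ₃ : t₂ < μ₃ := by nlinarith [ht₂]
    have hVt₂ : (1-ε₃)*(V t₂ - 1) = -ε₃*μ₃^2 := by
      rw [hV2 t₂ hμ₂t₂.le ht₂μ₃.le]
      linear_combination (ε₃*(2*(1-ε₃)*t₂ - (1-2*ε₃)*μ₃))*ht₂
    have hstrict : V t₂ < V sstar := by
      rcases le_or_gt sstar μ₁ with h | h
      · rw [hVlo sstar h]
        nlinarith [hVt₂, mul_pos hε₃ (mul_pos hμ₃ hμ₃)]
      · have hm := min1 sstar h.le hs.2
        nlinarith [hVt₂, mul_le_mul_of_nonneg_left hm he3.le, mul_pos he1 he3, hDn]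
    exact absurd (hmin t₂) (not_le.2 hstrict)
  · intro hC
    by_cases hS1 : (1-2*ε₁)*μ₁ ≤ 2*(1-ε₁)*μ₂
    · set t₁ := (1-2*ε₁)*μ₁/(2*(1-ε₁)) with ht₁def
      have ht₁ : 2*(1-ε₁)*t₁ = (1-2*ε₁)*μ₁ := by
        rw [ht₁def]; field_simp
      have hμ₁t₁ : μ₁ < t₁ := by nlinarith [ht₁]
      have ht₁μ₂ : t₁ ≤ μ₂ := by nlinarith [ht₁, hS1]
      have hVt₁ : (1-ε₁)*(V t₁ - 1) = -ε₁*μ₁^2 := by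
        rw [hV1 t₁ hμ₁t₁.le ht₁μ₂]
        linear_combination (ε₁*(2*(1-ε₁)*t₁ - (1-2*ε₁)*μ₁))*ht₁
      have hVt₁le : V t₁ ≤ 1 := by
        nlinarith [hVt₁, mul_nonneg hε₁.le (sq_nonneg μ₁)]
      have hglob : ∀ s, V t₁ ≤ V s := by
        intro s
        rcases le_or_gt s μ₁ with h | h
        · rw [hVlo s h]; exact hVt₁le
        rcases le_or_gt s μ₂ with h2 | h2
        · have hm := min1 s h.le h2
          nlinarith [hVt₁]
        rcases le_or_gt s μ₃ with h3 | h3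
        · rcases hC with hS2 | hD
          · have hmono : V μ₂ ≤ V s := by
              rw [hV2 s h2.le h3, hV2 μ₂ le_rfl h23.le]
              nlinarith [mul_nonneg (by linarith : (0:ℝ) ≤ s - μ₂)
                (by nlinarith [hS2, h2, he3] : (0:ℝ) ≤ (1-ε₃)*(s+μ₂) - (1-2*ε₃)*μ₃), hε₃]
            have hm := min1 μ₂ h12.le le_rfl
            nlinarith [hVt₁, hmono]
          · have hm := min2 s h2.le h3
            nlinarith [hVt₁, mul_le_mul_of_nonneg_left hm he1.le, mul_pos he1 he3, hD]
        · rw [hVhi s h3.le]; exact hVt₁le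
      exact ⟨hlow.le, le_trans (hleast t₁ hglob) ht₁μ₂⟩
    · have hS2 : (1-2*ε₃)*μ₃ ≤ 2*(1-ε₃)*μ₂ := by
        rcases hC with h | h
        · exact h
        · exact absurd (DS1 h) hS1
      push_neg at hS1
      have hglob : ∀ s, V μ₂ ≤ V s := by
        intro s
        rcases le_or_gt s μ₁ with h | h
        · rw [hVlo s h]; linarith [hVμ₂lt]
        rcases le_or_gt s μ₂ with h2 | h2
        · rw [hV1 s h.le h2, hV1 μ₂ h12.le le_rfl]
          nlinarith [mul_nonneg (by linarith : (0:ℝ) ≤ μ₂ - s)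
            (by nlinarith : (0:ℝ) ≤ (1-2*ε₁)*μ₁ - (1-ε₁)*(s+μ₂)), hε₁]
        rcases le_or_gt s μ₃ with h3 | h3
        · rw [hV2 s h2.le h3, hV2 μ₂ le_rfl h23.le]
          nlinarith [mul_nonneg (by linarith : (0:ℝ) ≤ s - μ₂)
            (by nlinarith [hS2, h2, he3] : (0:ℝ) ≤ (1-ε₃)*(s+μ₂) - (1-2*ε₃)*μ₃), hε₃]
        · rw [hVhi s h3.le]; linarith [hVμ₂lt]
      exact ⟨hlow.le, hleast μ₂ hglob⟩

private lemma sqrt_half_iff (a m : ℝ) (ha : 0 < a) (hm : m < 0) :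
    a ≤ 2*m^2 ↔ m ≤ -(Real.sqrt 2/2)*Real.sqrt a := by
  have hr2 : Real.sqrt a^2 = a := Real.sq_sqrt ha.le
  have hr0 : 0 < Real.sqrt a := Real.sqrt_pos.2 ha
  have hs2 : Real.sqrt 2^2 = 2 := Real.sq_sqrt (by norm_num)
  have hs0 : 0 < Real.sqrt 2 := Real.sqrt_pos.2 (by norm_num)
  constructor
  · intro h
    have haux : 0 < Real.sqrt 2/2*Real.sqrt a - m := by nlinarith [mul_pos hs0 hr0]
    nlinarith [haux, hr2, hs2, h]
  · intro h
    have h' : Real.sqrt 2/2*Real.sqrt a ≤ -m := by linarith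
    have hmul := mul_le_mul h' h' (by positivity) (by linarith : (0:ℝ) ≤ -m)
    nlinarith [hmul, hr2, hs2]

private lemma sqrt_div_iff (b arg m l : ℝ) (hb : 0 < b) (harg : 0 < arg) (hm : m < 0)
    (hl0 : 0 < l) :
    (b*l)^2 ≤ m^2*arg ↔ m ≤ -(b / Real.sqrt arg)*l := by
  have hw2 : Real.sqrt arg^2 = arg := Real.sq_sqrt harg.le
  have hw0 : 0 < Real.sqrt arg := Real.sqrt_pos.2 harg
  have heq : -(b / Real.sqrt arg)*l = -(b*l/Real.sqrt arg) := by ring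
  rw [heq, le_neg, div_le_iff₀ hw0]
  constructor
  · intro h
    nlinarith [h, hw2, mul_pos hb hl0, mul_pos (by linarith : (0:ℝ) < -m) hw0]
  · intro h
    have hs := pow_le_pow_left₀ (by positivity) h 2
    nlinarith [hs, hw2]

private lemma u1_iff (ε₁ ε₃ μ₁ μ₃ : ℝ)
    (hε₁ : 0 < ε₁) (hε₂ : 0 < 1 - ε₁ - ε₃) (hε₃ : 0 < ε₃)
    (hμ₁ : μ₁ < 0) (hμ₃ : 0 < μ₃) (hvtx : 0 < (1-ε₁)*μ₃ + ε₁*μ₁)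
    (F : ε₁*(1-ε₃)*μ₁^2 + 2*ε₁*ε₃*(μ₁*μ₃) + ε₃*(1-ε₁)*μ₃^2 = 1-ε₁-ε₃) :
    (0 ≤ ε₁*(1-ε₃)*μ₁^2 - ε₃*(1-ε₁)*μ₃^2) ↔
      μ₁ ≤ -(Real.sqrt 2 / 2) * Real.sqrt ((1 - ε₁) / ε₁ +
        Real.sqrt ((1 - ε₁) / ε₁) * Real.sqrt (ε₃ / (1 - ε₃))) := by
  have he1 : (0:ℝ) < 1 - ε₁ := by linarith
  have he3 : (0:ℝ) < 1 - ε₃ := by linarith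
  set l := Real.sqrt (ε₃ / (1 - ε₃)) with hldef
  have hl0 : 0 < l := Real.sqrt_pos.2 (by positivity)
  have hl2 : (1-ε₃)*l^2 = ε₃ := by
    rw [hldef, Real.sq_sqrt (by positivity)]; field_simp
  set k := Real.sqrt ((1 - ε₁) / ε₁) with hkdef
  have hk0 : 0 < k := Real.sqrt_pos.2 (by positivity)
  have hk2 : ε₁*k^2 = 1-ε₁ := by
    rw [hkdef, Real.sq_sqrt (by positivity)]; field_simp
  have hε₂kl : ε₁*(1-ε₃)*(k^2-l^2) = 1-ε₁-ε₃ := by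
    linear_combination (1-ε₃)*hk2 - ε₁*hl2
  have hk2l2 : 0 < k^2 - l^2 := by nlinarith [hε₂kl, mul_pos hε₁ he3]
  have hlk : l < k := by nlinarith [hk2l2, hk0, hl0, mul_pos hk0 hl0]
  have hkl2 : ε₁*(1-ε₃)*(k*l)^2 = ε₃*(1-ε₁) := by
    linear_combination (1-ε₃)*l^2*hk2 + (1-ε₁)*hl2
  have hin : (1 - ε₁) / ε₁ + k * l = k^2 + k*l := by
    rw [hkdef, Real.sq_sqrt (by positivity)]
  rw [hin]
  have step1 : (0 ≤ ε₁*(1-ε₃)*μ₁^2 - ε₃*(1-ε₁)*μ₃^2) ↔ k*l*μ₃ + μ₁ ≤ 0 := by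
    have hDef : ε₁*(1-ε₃)*μ₁^2 - ε₃*(1-ε₁)*μ₃^2
        = ε₁*(1-ε₃)*(μ₁^2 - (k*l*μ₃)^2) := by
      linear_combination (μ₃^2)*hkl2
    have hpos : 0 < k*l*μ₃ - μ₁ := by
      nlinarith [mul_pos (mul_pos hk0 hl0) hμ₃]
    constructor
    · intro hD
      have h6 : 0 ≤ μ₁^2 - (k*l*μ₃)^2 := by
        nlinarith [hDef, hD, mul_pos hε₁ he3]
      nlinarith [h6, hpos]
    · intro hu
      have hsq : 0 ≤ (-(k*l*μ₃+μ₁))*(k*l*μ₃ - μ₁) :=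
        mul_nonneg (by linarith) hpos.le
      nlinarith [hsq, hDef, mul_pos hε₁ he3]
  have hslope2 : 0 < ε₃*(1-ε₁)*(k*l*μ₃ - μ₁) + 2*ε₁*ε₃*(k*l)*μ₁ := by
    have hid : ε₃*(1-ε₁)*(k*l*μ₃ - μ₁) + 2*ε₁*ε₃*(k*l)*μ₁
        = ε₃*(k*l)*((1-ε₁)*μ₃+ε₁*μ₁) + ε₃*ε₁*k*(k-l)*(-μ₁) := by
      linear_combination ε₃*μ₁*hk2
    rw [hid]
    have p1 : 0 < ε₃*(k*l)*((1-ε₁)*μ₃+ε₁*μ₁) :=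
      mul_pos (mul_pos hε₃ (mul_pos hk0 hl0)) hvtx
    have p2 : 0 < ε₃*ε₁*k*(k-l)*(-μ₁) :=
      mul_pos (mul_pos (mul_pos (mul_pos hε₃ hε₁) hk0)
        (by linarith : (0:ℝ) < k - l)) (by linarith : (0:ℝ) < -μ₁)
    linarith
  have hPT2v : ε₃*(1-ε₁)*μ₁^2 - 2*ε₁*ε₃*(k*l)*μ₁^2 + (k*l)^2*(ε₁*(1-ε₃)*μ₁^2 - (1-ε₁-ε₃))
      = -((k*l*μ₃ + μ₁) * (ε₃*(1-ε₁)*(k*l*μ₃ - μ₁) + 2*ε₁*ε₃*(k*l)*μ₁)) := by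
    linear_combination (k*l)^2*F
  have e2 : k*(ε₃*(1-ε₁)*μ₁^2 - 2*ε₁*ε₃*(k*l)*μ₁^2 + (k*l)^2*(ε₁*(1-ε₃)*μ₁^2 - (1-ε₁-ε₃)))
      = ε₁*(1-ε₃)*k^2*l^2*(k-l)*(2*μ₁^2 - k^2 - k*l) := by
    linear_combination (-(k*μ₁^2))*hkl2 + (2*ε₁*k^2*l*μ₁^2)*hl2 + (k^3*l^2)*hε₂kl
  have hcoef : 0 < ε₁*(1-ε₃)*k^2*l^2*(k-l) :=
    mul_pos (mul_pos (mul_pos (mul_pos hε₁ he3) (pow_pos hk0 2))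
      (pow_pos hl0 2)) (by linarith : (0:ℝ) < k - l)
  have step2 : (k*l*μ₃ + μ₁ ≤ 0) ↔ k^2 + k*l ≤ 2*μ₁^2 := by
    constructor
    · intro hu
      have hPT2 : 0 ≤ ε₃*(1-ε₁)*μ₁^2 - 2*ε₁*ε₃*(k*l)*μ₁^2
          + (k*l)^2*(ε₁*(1-ε₃)*μ₁^2 - (1-ε₁-ε₃)) := by
        rw [hPT2v]
        exact neg_nonneg.2 (mul_nonpos_of_nonpos_of_nonneg hu hslope2.le)
      have h5 : 0 ≤ ε₁*(1-ε₃)*k^2*l^2*(k-l)*(2*μ₁^2 - k^2 - k*l) := by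
        rw [← e2]; exact mul_nonneg hk0.le hPT2
      nlinarith [h5, hcoef]
    · intro h2μ
      have h5 : 0 ≤ ε₁*(1-ε₃)*k^2*l^2*(k-l)*(2*μ₁^2 - k^2 - k*l) :=
        mul_nonneg hcoef.le (by linarith)
      have hPT2 : 0 ≤ ε₃*(1-ε₁)*μ₁^2 - 2*ε₁*ε₃*(k*l)*μ₁^2
          + (k*l)^2*(ε₁*(1-ε₃)*μ₁^2 - (1-ε₁-ε₃)) := by
        rw [← e2] at h5
        nlinarith [h5, hk0]
      rw [hPT2v] at hPT2
      nlinarith [hslope2]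
  rw [step1, step2]
  exact sqrt_half_iff _ _ (by positivity) hμ₁

private lemma u2_iff (ε₁ ε₃ μ₁ μ₂ μ₃ : ℝ)
    (hε₁ : 0 < ε₁) (hε₂ : 0 < 1 - ε₁ - ε₃) (hε₃ : 0 < ε₃)
    (hμ₁ : μ₁ < 0) (hμ₃ : 0 < μ₃) (hvtx : 0 < (1-ε₁)*μ₃ + ε₁*μ₁)
    (m1 : ε₁*μ₁ + (1-ε₁-ε₃)*μ₂ + ε₃*μ₃ = 0)
    (F : ε₁*(1-ε₃)*μ₁^2 + 2*ε₁*ε₃*(μ₁*μ₃) + ε₃*(1-ε₁)*μ₃^2 = 1-ε₁-ε₃) :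
    ((1-2*ε₃)*μ₃ ≤ 2*(1-ε₃)*μ₂) ↔
      μ₁ ≤ -((2 * (1 - ε₁ - ε₃) + 4 * ε₁ * ε₃) /
          Real.sqrt (4 * ε₁ * ε₃ * (1 - ε₁ - ε₃ + 4 * ε₁ * ε₃))) *
        Real.sqrt (ε₃ / (1 - ε₃)) := by
  have he1 : (0:ℝ) < 1 - ε₁ := by linarith
  have he3 : (0:ℝ) < 1 - ε₃ := by linarith
  have hd : (0:ℝ) < 1-ε₁-ε₃+2*ε₁*ε₃ := by nlinarith
  have hQ : (0:ℝ) < 1-ε₁-ε₃+4*ε₁*ε₃ := by nlinarith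
  have hnum : (0:ℝ) < 2*(1-ε₁-ε₃)+4*ε₁*ε₃ := by nlinarith
  set l := Real.sqrt (ε₃ / (1 - ε₃)) with hldef
  have hl0 : 0 < l := Real.sqrt_pos.2 (by positivity)
  have hl2 : (1-ε₃)*l^2 = ε₃ := by
    rw [hldef, Real.sq_sqrt (by positivity)]; field_simp
  have hlinS2 : (1-ε₁-ε₃)*(2*(1-ε₃)*μ₂ - (1-2*ε₃)*μ₃)
      = -2*ε₁*(1-ε₃)*μ₁ - (1-ε₁-ε₃+2*ε₁*ε₃)*μ₃ := by
    linear_combination 2*(1-ε₃)*m1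
  have hslope : 0 < ε₃*(1-ε₁)*(-2*ε₁*(1-ε₃)*μ₁ + (1-ε₁-ε₃+2*ε₁*ε₃)*μ₃)
      + 2*ε₁*ε₃*μ₁*(1-ε₁-ε₃+2*ε₁*ε₃) := by
    have hid2 : ε₃*(1-ε₁)*(-2*ε₁*(1-ε₃)*μ₁ + (1-ε₁-ε₃+2*ε₁*ε₃)*μ₃)
        + 2*ε₁*ε₃*μ₁*(1-ε₁-ε₃+2*ε₁*ε₃)
        = ε₃*ε₁*(1-ε₁-ε₃)*(-μ₁)
          + ε₃*(1-ε₁-ε₃+2*ε₁*ε₃)*((1-ε₁)*μ₃+ε₁*μ₁) := by ring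
    rw [hid2]
    have p1 : 0 < ε₃*ε₁*(1-ε₁-ε₃)*(-μ₁) :=
      mul_pos (mul_pos (mul_pos hε₃ hε₁) hε₂) (by linarith : (0:ℝ) < -μ₁)
    have p2 : 0 < ε₃*(1-ε₁-ε₃+2*ε₁*ε₃)*((1-ε₁)*μ₃+ε₁*μ₁) :=
      mul_pos (mul_pos hε₃ hd) hvtx
    linarith
  have hPhiT : (1-ε₁-ε₃)*(ε₁*(1-ε₃)*(1-ε₁-ε₃+4*ε₁*ε₃)*μ₁^2 - (1-ε₁-ε₃+2*ε₁*ε₃)^2)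
      = (-2*ε₁*(1-ε₃)*μ₁ - (1-ε₁-ε₃+2*ε₁*ε₃)*μ₃)
        * (ε₃*(1-ε₁)*(-2*ε₁*(1-ε₃)*μ₁ + (1-ε₁-ε₃+2*ε₁*ε₃)*μ₃)
          + 2*ε₁*ε₃*μ₁*(1-ε₁-ε₃+2*ε₁*ε₃)) := by
    linear_combination (1-ε₁-ε₃+2*ε₁*ε₃)^2*F
  have stepA : ((1-2*ε₃)*μ₃ ≤ 2*(1-ε₃)*μ₂) ↔
      (1-ε₁-ε₃+2*ε₁*ε₃)^2 ≤ ε₁*(1-ε₃)*(1-ε₁-ε₃+4*ε₁*ε₃)*μ₁^2 := by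
    constructor
    · intro hS2
      have hG : 0 ≤ -2*ε₁*(1-ε₃)*μ₁ - (1-ε₁-ε₃+2*ε₁*ε₃)*μ₃ := by
        nlinarith [hlinS2,
          mul_nonneg hε₂.le (by linarith : (0:ℝ) ≤ 2*(1-ε₃)*μ₂ - (1-2*ε₃)*μ₃)]
      nlinarith [hPhiT, mul_nonneg hG hslope.le, hε₂]
    · intro hP2
      by_contra hS2n
      push_neg at hS2n
      have hG : -2*ε₁*(1-ε₃)*μ₁ - (1-ε₁-ε₃+2*ε₁*ε₃)*μ₃ < 0 := by
        nlinarith [hlinS2,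
          mul_pos hε₂ (by linarith : (0:ℝ) < (1-2*ε₃)*μ₃ - 2*(1-ε₃)*μ₂)]
      nlinarith [hPhiT,
        mul_pos (by linarith : (0:ℝ) < 2*ε₁*(1-ε₃)*μ₁ + (1-ε₁-ε₃+2*ε₁*ε₃)*μ₃) hslope,
        mul_nonneg hε₂.le (by linarith : (0:ℝ) ≤
          ε₁*(1-ε₃)*(1-ε₁-ε₃+4*ε₁*ε₃)*μ₁^2 - (1-ε₁-ε₃+2*ε₁*ε₃)^2)]
  have hB := sqrt_div_iff (2*(1-ε₁-ε₃)+4*ε₁*ε₃) (4*ε₁*ε₃*(1-ε₁-ε₃+4*ε₁*ε₃)) μ₁ l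
    hnum (by positivity) hμ₁ hl0
  rw [stepA, ← hB]
  constructor
  · intro h
    nlinarith [h, hl2, hε₃, he3, hQ, sq_nonneg μ₁, mul_pos hε₁ hε₃]
  · intro h
    nlinarith [h, hl2, hε₃, he3, hQ, sq_nonneg μ₁, mul_pos hε₁ hε₃]

lemma tri_var (ε₁ ε₂ ε₃ : ℝ) (h1 : 0 ≤ ε₁) (h2 : 0 ≤ ε₂) (h3 : 0 ≤ ε₃)
    (hsum : ε₁ + ε₂ + ε₃ = 1) (μ₁ μ₂ μ₃ s : ℝ) :
    variance (fun x => |x - s|) (ENNReal.ofReal ε₁ • Measure.dirac μ₁ +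
      ENNReal.ofReal ε₂ • Measure.dirac μ₂ + ENNReal.ofReal ε₃ • Measure.dirac μ₃) =
      (ε₁ * (μ₁ - s)^2 + ε₂ * (μ₂ - s)^2 + ε₃ * (μ₃ - s)^2)
      - (ε₁ * |μ₁ - s| + ε₂ * |μ₂ - s| + ε₃ * |μ₃ - s|)^2 := by
  have habs : Measurable fun x : ℝ => |x - s| := (measurable_id.sub measurable_const).abs
  have := tri_prob ε₁ ε₂ ε₃ h1 h2 h3 hsum μ₁ μ₂ μ₃
  rw [variance_eq_sub (tri_memLp ε₁ ε₂ ε₃ μ₁ μ₂ μ₃ _ habs)]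
  have e1 : ((fun x : ℝ => |x - s|) ^ 2) = fun x : ℝ => |x - s| ^ 2 := by
    funext x; simp
  rw [e1, tri_integral ε₁ ε₂ ε₃ h1 h2 h3 μ₁ μ₂ μ₃ _ (habs.pow_const 2),
    tri_integral ε₁ ε₂ ε₃ h1 h2 h3 μ₁ μ₂ μ₃ _ habs, sq_abs, sq_abs, sq_abs]


/-- Let `X` be a standardized 3-Dirac mixture with ordered locations
`μ₁ < μ₂ < μ₃` and probabilities `ε₁, ε₂, ε₃ > 0` summing to `1`, and let `s⋆` be the smallest
minimizer of `s ↦ Var |X - s|`. Then `s⋆ ∈ [μ₁, μ₂]` if and only if `μ₁ ≤ max {U₁, U₂}`,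
where `U₁ = -(√2/2) √((1-ε₁)/ε₁ + √((1-ε₁)/ε₁) √(ε₃/(1-ε₃)))` and
`U₂ = -((2ε₂ + 4ε₁ε₃)/√(4ε₁ε₃(ε₂ + 4ε₁ε₃))) √(ε₃/(1-ε₃))`. -/
theorem stmt_16 (ε₁ ε₂ ε₃ μ₁ μ₂ μ₃ : ℝ)
    (hε₁ : 0 < ε₁) (hε₂ : 0 < ε₂) (hε₃ : 0 < ε₃) (hsum : ε₁ + ε₂ + ε₃ = 1)
    (h12 : μ₁ < μ₂) (h23 : μ₂ < μ₃)
    (P : Measure ℝ)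
    (hP : P = ENNReal.ofReal ε₁ • Measure.dirac μ₁ + ENNReal.ofReal ε₂ • Measure.dirac μ₂ +
      ENNReal.ofReal ε₃ • Measure.dirac μ₃)
    (hmean : ∫ x, x ∂P = 0) (hm2 : ∫ x, x ^ 2 ∂P = 1)
    (sstar : ℝ)
    (hmin : ∀ s : ℝ, variance (fun x => |x - sstar|) P ≤ variance (fun x => |x - s|) P)
    (hleast : ∀ t : ℝ,
      (∀ s : ℝ, variance (fun x => |x - t|) P ≤ variance (fun x => |x - s|) P) → sstar ≤ t) :
    sstar ∈ Set.Icc μ₁ μ₂ ↔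
      μ₁ ≤ max
        (-(Real.sqrt 2 / 2) * Real.sqrt ((1 - ε₁) / ε₁ +
          Real.sqrt ((1 - ε₁) / ε₁) * Real.sqrt (ε₃ / (1 - ε₃))))
        (-((2 * ε₂ + 4 * ε₁ * ε₃) / Real.sqrt (4 * ε₁ * ε₃ * (ε₂ + 4 * ε₁ * ε₃))) *
          Real.sqrt (ε₃ / (1 - ε₃))) := by
  have hε₂eq : ε₂ = 1 - ε₁ - ε₃ := by linarith
  subst hε₂eq
  subst hP
  have h2' : (0:ℝ) < 1 - ε₁ - ε₃ := hε₂
  -- moments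
  have hint1 := tri_integral ε₁ (1-ε₁-ε₃) ε₃ hε₁.le h2'.le hε₃.le μ₁ μ₂ μ₃
    (fun x => x) measurable_id
  have hint2 := tri_integral ε₁ (1-ε₁-ε₃) ε₃ hε₁.le h2'.le hε₃.le μ₁ μ₂ μ₃
    (fun x => x^2) (measurable_id.pow_const 2)
  rw [hint1] at hmean
  rw [hint2] at hm2
  have m1 : ε₁*μ₁ + (1-ε₁-ε₃)*μ₂ + ε₃*μ₃ = 0 := by linear_combination hmean
  have m2 : ε₁*μ₁^2 + (1-ε₁-ε₃)*μ₂^2 + ε₃*μ₃^2 = 1 := by linear_combination hm2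
  -- variance as explicit function
  set V : ℝ → ℝ := fun s => (ε₁*(μ₁-s)^2 + (1-ε₁-ε₃)*(μ₂-s)^2 + ε₃*(μ₃-s)^2)
    - (ε₁*|μ₁-s| + (1-ε₁-ε₃)*|μ₂-s| + ε₃*|μ₃-s|)^2 with hVdef
  have hVar : ∀ s, variance (fun x => |x - s|) (ENNReal.ofReal ε₁ • Measure.dirac μ₁ +
      ENNReal.ofReal (1-ε₁-ε₃) • Measure.dirac μ₂ + ENNReal.ofReal ε₃ • Measure.dirac μ₃)
      = V s := fun s =>
    tri_var ε₁ (1-ε₁-ε₃) ε₃ hε₁.le h2'.le hε₃.le hsum μ₁ μ₂ μ₃ s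
  have hmin' : ∀ s, V sstar ≤ V s := fun s => by
    rw [← hVar sstar, ← hVar s]; exact hmin s
  have hleast' : ∀ t, (∀ s, V t ≤ V s) → sstar ≤ t := fun t h =>
    hleast t (fun s => by rw [hVar t, hVar s]; exact h s)
  obtain ⟨hVlo, hV1, hV2, hVhi⟩ := regions hε₁ h2' hε₃ h12 h23 m1 m2 (fun s => rfl)
  have hcore := core ε₁ ε₃ μ₁ μ₂ μ₃ V hε₁ h2' hε₃ h12 h23 m1 m2
    hVlo hV1 hV2 hVhi sstar hmin' hleast'
  have hμ₁ : μ₁ < 0 := by nlinarith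
  have hμ₃ : 0 < μ₃ := by nlinarith
  have hvtx : 0 < (1-ε₁)*μ₃ + ε₁*μ₁ := by nlinarith
  have F : ε₁*(1-ε₃)*μ₁^2 + 2*ε₁*ε₃*(μ₁*μ₃) + ε₃*(1-ε₁)*μ₃^2 = 1-ε₁-ε₃ := by
    linear_combination (1-ε₁-ε₃)*m2 + (ε₁*μ₁ + ε₃*μ₃ - (1-ε₁-ε₃)*μ₂)*m1
  rw [hcore, le_max_iff,
    ← u1_iff ε₁ ε₃ μ₁ μ₃ hε₁ h2' hε₃ hμ₁ hμ₃ hvtx F,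
    ← u2_iff ε₁ ε₃ μ₁ μ₂ μ₃ hε₁ h2' hε₃ hμ₁ hμ₃ hvtx m1 F]
  exact or_comm
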